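/- arXiv:1710.03390 — 5 statements merged into one kernel-verified Lean document; each statement's English description precedes it below -/
import Mathlib

section
/- For every causal model M, every basic formula φ, and every endogenous variable V: if V ∈ HP(M,φ) (i.e., V belongs to some complex cause of φ in M according to Halpern's 2015 definition), then V is a putative cause of φ in M with respect to the theory HP; that is, there exists a model M' ∈ ℳ(HP(M,φ)) such that S_M(V) = S_{M'}(V) and V ∈ ButFor(M',φ). -/
namespace HPFramework

open Classical

/-- A causal model in the Halpern–Pearl framework, over exogenous variables `U`,
endogenous variables `V` and value domain `D`.  It packages the causal structure
(the finite ranges of the variables), the DAG (the well-founded `parent` relation),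
the structural equations `F` (each depending only on the exogenous variables and the
parents, and taking values in the range), and the context `ctx`. -/
structure CausalModel (U V D : Type) [Fintype U] [Fintype V] where
  rangeU : U → Finset D
  range : V → Finset D
  rangeU_nonempty : ∀ W, (rangeU W).Nonempty
  range_nonempty : ∀ X, (range X).Nonempty
  parent : V → V → Prop
  acyclic : WellFounded parent
  F : V → (U → D) → (V → D) → D
  F_parents : ∀ X u (a b : V → D), (∀ Y, parent Y X → a Y = b Y) → F X u a = F X u b
  F_range : ∀ X u v, (∀ W, u W ∈ rangeU W) → (∀ Y, v Y ∈ range Y) → F X u v ∈ range X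
  ctx : U → D
  ctx_range : ∀ W, ctx W ∈ rangeU W

variable {U V D : Type} [Fintype U] [Fintype V]

/-- The unique solution `S_M` of the system of structural equations of `M`. -/
noncomputable def sol (M : CausalModel U V D) : V → D :=
  WellFounded.fix M.acyclic fun X ih =>
    M.F X M.ctx fun Y => if h : M.parent Y X then ih Y h else (M.range_nonempty Y).choose

/-- A partial, range-permitted assignment of values to the endogenous variables of `M`. -/
def PAssign (M : CausalModel U V D) : Type :=
  {g : V → Option D // ∀ X d, g X = some d → d ∈ M.range X}

/-- The intervened model `M_[X⃗ ← x⃗]`: the equation of each variable assigned a value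
by `g` is replaced by the corresponding constant; other equations are unchanged. -/
noncomputable def intervene (M : CausalModel U V D) (g : PAssign M) : CausalModel U V D where
  rangeU := M.rangeU
  range := M.range
  rangeU_nonempty := M.rangeU_nonempty
  range_nonempty := M.range_nonempty
  parent := M.parent
  acyclic := M.acyclic
  F := fun X u v => (g.1 X).getD (M.F X u v)
  F_parents := by
    intro X u a b hab
    cases h : g.1 X with
    | none => simp only [h, Option.getD_none]; exact M.F_parents X u a b hab
    | some d => simp [h]
  F_range := by
    intro X u v hu hv
    cases h : g.1 X with
    | none => simpa [h] using M.F_range X u v hu hv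
    | some d => simpa [h] using g.2 X d h
  ctx := M.ctx
  ctx_range := M.ctx_range

/-- Basic formulas: Boolean combinations of atoms `(X = x)` with `X` endogenous. -/
inductive BForm (V D : Type) : Type where
  | atom : V → D → BForm V D
  | not : BForm V D → BForm V D
  | and : BForm V D → BForm V D → BForm V D

/-- Evaluation of a basic formula at an assignment of values to the endogenous variables. -/
def BForm.eval (s : V → D) : BForm V D → Prop
  | .atom X x => s X = x
  | .not φ => ¬ φ.eval s
  | .and φ ψ => φ.eval s ∧ ψ.eval s

/-- `M ⊨ φ` for a basic formula `φ`, evaluated via the solution `S_M`. -/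
def Sat (M : CausalModel U V D) (φ : BForm V D) : Prop := (BForm.eval (sol M)) φ

variable [DecidableEq V]

/-- The single intervention `[X ← x]` (with `x` in the range of `X`). -/
noncomputable def single (M : CausalModel U V D) (X : V) (x : D)
    (hx : x ∈ M.range X) : PAssign M :=
  ⟨fun Y => if Y = X then some x else none, by
    intro Y d h
    simp only at h
    split at h
    next heq => cases h; exact heq ▸ hx
    next => cases h⟩

/-- The but-for theory: `X ∈ ButFor(M,φ)` iff `M ⊨ φ` and there is `x ∈ R(X)` with
`M ⊨ [X ← x] ¬φ`. -/
noncomputable def ButFor (M : CausalModel U V D) (φ : BForm V D) : Set V :=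
  {X | Sat M φ ∧ ∃ x, ∃ hx : x ∈ M.range X, ¬ Sat (intervene M (single M X x hx)) φ}

/-- `ℳ(A)` (relative to `M`): all models obtained from `M` by a (possibly partial)
range-permitted assignment to the variables in `A`, while any assigned variable outside
`A` is held fixed at its actual value in `M`. -/
def MSet (M : CausalModel U V D) (A : Set V) : Set (CausalModel U V D) :=
  {M' | ∃ g : PAssign M,
    (∀ X, X ∉ A → ∀ d, g.1 X = some d → d = sol M X) ∧ M' = intervene M g}

/-- A causal theory: a map assigning to every model and basic formula a set of
endogenous variables (the causes). -/
def CausalTheory (U V D : Type) [Fintype U] [Fintype V] : Type _ :=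
  CausalModel U V D → BForm V D → Set V

/-- `X` is a putative cause of `φ` in `M` (w.r.t. the theory `C`). -/
noncomputable def Putative (C : CausalTheory U V D) (M : CausalModel U V D)
    (φ : BForm V D) (X : V) : Prop :=
  ∃ M' ∈ MSet M (C M φ), sol M X = sol M' X ∧ X ∈ ButFor M' φ

/-- `X` is a preempted cause of `φ` in `M` (w.r.t. `C`): putative but not a cause. -/
noncomputable def Preempted (C : CausalTheory U V D) (M : CausalModel U V D)
    (φ : BForm V D) (X : V) : Prop :=
  Putative C M φ X ∧ X ∉ C M φ

/-- A theory is similarity-based if it recognises at least all but-for causes and at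
most all putative causes. -/
noncomputable def SimilarityBased (C : CausalTheory U V D) : Prop :=
  ∀ M φ, ButFor M φ ⊆ C M φ ∧ ∀ X ∈ C M φ, Putative C M φ X

/-- The principle of presumption. -/
noncomputable def Presumption (C : CausalTheory U V D) : Prop :=
  ∀ M φ X, Preempted C M φ X →
    ∀ M' ∈ MSet M (C M φ), sol M' X = sol M X → X ∈ ButFor M' φ →
      ∃ W, W ∉ C M φ ∧ sol M W ≠ sol M' W

/-- Empirical causal theories (fixed-point characterisation). -/
noncomputable def Empirical (C : CausalTheory U V D) : Prop :=
  ∀ M φ X, X ∈ C M φ ↔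
    ∃ M' ∈ MSet M (C M φ), sol M X = sol M' X ∧ X ∈ ButFor M' φ ∧
      ∀ W, W ∉ C M φ → sol M W = sol M' W

/-- The relation `M₁ ⊑_{C,φ} M₂`. -/
noncomputable def CRel (C : CausalTheory U V D) (φ : BForm V D)
    (M₁ M₂ : CausalModel U V D) : Prop :=
  M₂ ∈ MSet M₁ (C M₁ φ) ∧ Sat M₂ φ ∧ ∀ X, X ∉ C M₁ φ → sol M₁ X = sol M₂ X

/-- The closure property. -/
noncomputable def Closure (C : CausalTheory U V D) : Prop :=
  ∀ (M : CausalModel U V D) (φ : BForm V D) M', CRel C φ M M' → C M' φ ⊆ C M φ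

/-- AC1 and AC2 of Halpern's (2015) definition, for the set `Xs`: `M ⊨ φ` and there is
an intervention assigning (range-permitted) values to all of `Xs` and holding any other
assigned variable fixed at its actual value, after which `¬φ` holds. -/
noncomputable def AC12 (M : CausalModel U V D) (φ : BForm V D) (Xs : Set V) : Prop :=
  Sat M φ ∧ ∃ g : PAssign M,
    (∀ X ∈ Xs, (g.1 X).isSome) ∧
    (∀ X, X ∉ Xs → ∀ d, g.1 X = some d → d = sol M X) ∧
    ¬ Sat (intervene M g) φ

/-- `Xs` is a complex cause of `φ` in `M`: AC1, AC2 and the minimality condition AC3. -/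
noncomputable def ComplexCause (M : CausalModel U V D) (φ : BForm V D) (Xs : Set V) : Prop :=
  AC12 M φ Xs ∧ ∀ Ys : Set V, Ys ⊂ Xs → ¬ AC12 M φ Ys

/-- The HP theory: `X ∈ HP(M,φ)` iff `X` belongs to some complex cause of `φ` in `M`. -/
noncomputable def HP : CausalTheory U V D := fun M φ =>
  {X | ∃ Xs : Set V, X ∈ Xs ∧ ComplexCause M φ Xs}

/-- Helper: a relation admitting a strictly monotone rank function is well-founded. -/
theorem wf_of_rank {α : Type} (r : α → α → Prop) (rk : α → ℕ)
    (h : ∀ a b, r a b → rk a < rk b) : WellFounded r :=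
  Subrelation.wf (fun {a b} hr => h a b hr) (InvImage.wf rk Nat.lt_wfRel.wf)



theorem sol_eq (M : CausalModel U V D) (X : V) :
    sol M X = M.F X M.ctx
      (fun Y => if h : M.parent Y X then sol M Y else (M.range_nonempty Y).choose) := by
  rw [sol, WellFounded.fix_eq]

theorem sol_mem_range (M : CausalModel U V D) (X : V) : sol M X ∈ M.range X := by
  induction X using WellFounded.induction M.acyclic with
  | _ X ih =>
    rw [sol_eq]
    apply M.F_range _ _ _ M.ctx_range
    intro Y
    by_cases h : M.parent Y X
    · simpa [h] using ih Y h
    · simpa [h] using (M.range_nonempty Y).choose_spec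

theorem sol_intervene_of_some (M : CausalModel U V D) (g : PAssign M) (X : V) (d : D)
    (h : g.1 X = some d) : sol (intervene M g) X = d := by
  rw [sol_eq]
  show (g.1 X).getD _ = d
  rw [h]; rfl

theorem intervene_comp (M : CausalModel U V D) (g₁ : PAssign M)
    (g₂ : PAssign (intervene M g₁)) (g₃ : PAssign M)
    (h : ∀ X, (g₂.1 X).isSome → g₃.1 X = g₂.1 X)
    (h' : ∀ X, g₂.1 X = none → g₃.1 X = g₁.1 X) :
    intervene (intervene M g₁) g₂ = intervene M g₃ := by
  unfold intervene
  congr 1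
  funext X u v
  cases hX : g₂.1 X with
  | some d => simp [hX, h X (by simp [hX])]
  | none => simp [hX, h' X hX]

/-- Proposition 1: every HP-cause is a putative cause w.r.t. HP. -/
theorem hp_cause_is_putative {U V D : Type} [Fintype U] [Fintype V] [DecidableEq V]
    (M : CausalModel U V D) (φ : BForm V D) (X : V)
    (h : X ∈ HP M φ) : Putative HP M φ X := by
  obtain ⟨Xs, hXXs, ⟨⟨hsat, g, hall, hout, hnsat⟩, hmin⟩⟩ := h
  have hHP : X ∈ HP M φ := ⟨Xs, hXXs, ⟨⟨hsat, g, hall, hout, hnsat⟩, hmin⟩⟩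
  obtain ⟨x, hgX⟩ := Option.isSome_iff_exists.mp (hall X hXXs)
  have hxr : x ∈ M.range X := g.2 X x hgX
  have hsr : sol M X ∈ M.range X := sol_mem_range M X
  set g' : PAssign M := ⟨fun Y => if Y = X then some (sol M X) else g.1 Y, by
    intro Y d hd
    by_cases hYX : Y = X
    · simp only [hYX, if_pos rfl] at hd
      cases hd; exact hYX ▸ hsr
    · simp only [if_neg hYX] at hd
      exact g.2 Y d hd⟩ with hg'
  set M' := intervene M g' with hM'
  have hg'X : g'.1 X = some (sol M X) := if_pos rfl
  have hsolX : sol M' X = sol M X := sol_intervene_of_some M g' X _ hg'X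
  -- membership in HP is used to discharge the outside condition
  have hsub : ∀ Y, Y ∈ Xs → Y ∈ HP M φ := fun Y hY =>
    ⟨Xs, hY, ⟨⟨hsat, g, hall, hout, hnsat⟩, hmin⟩⟩
  have hMSet : M' ∈ MSet M (HP M φ) := by
    refine ⟨g', ?_, rfl⟩
    intro Y hY d hd
    by_cases hYX : Y = X
    · exact absurd (hYX ▸ hHP) hY
    · simp only [hg', if_neg hYX] at hd
      exact hout Y (fun hmem => hY (hsub Y hmem)) d hd
  -- Sat M' φ, by minimality
  have hsat' : Sat M' φ := by
    by_contra hns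
    have hss : Xs \ {X} ⊂ Xs := ⟨Set.diff_subset, fun hs => (hs hXXs).2 rfl⟩
    refine hmin (Xs \ {X}) hss ⟨hsat, g', ?_, ?_, hns⟩
    · intro Y hY
      have hYX : Y ≠ X := hY.2
      simp only [hg', if_neg hYX]
      exact hall Y hY.1
    · intro Y hY d hd
      by_cases hYX : Y = X
      · subst hYX
        rw [hg'X] at hd
        exact (Option.some_injective _ hd).symm
      · simp only [hg', if_neg hYX] at hd
        exact hout Y (fun hmem => hY ⟨hmem, hYX⟩) d hd
  -- the composed intervention equals intervene M g
  have hcomp : intervene M' (single M' X x hxr) = intervene M g := by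
    apply intervene_comp
    · intro Y hY
      by_cases hYX : Y = X
      · subst hYX
        simp [single, hgX]
      · simp [single, hYX] at hY
    · intro Y hY
      by_cases hYX : Y = X
      · simp [single, hYX] at hY
      · simp [single, hYX, hg']
  refine ⟨M', hMSet, hsolX.symm, hsat', x, hxr, ?_⟩
  rw [hcomp]
  exact hnsat

end HPFramework
end

section
/- If a causal theory Cause is empirical, then Cause is similarity-based and Cause satisfies the principle of presumption. -/
namespace HPFramework

open Classical

variable {U V D : Type} [Fintype U] [Fintype V]

variable [DecidableEq V]

/-- The trivial (empty) partial assignment. -/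
def trivAssign (M : CausalModel U V D) : PAssign M :=
  ⟨fun _ => none, by intro X d h; cases h⟩

theorem intervene_triv (M : CausalModel U V D) : intervene M (trivAssign M) = M := by
  cases M
  simp only [intervene, trivAssign, Option.getD_none]

theorem self_mem_MSet (M : CausalModel U V D) (A : Set V) : M ∈ MSet M A := by
  refine ⟨trivAssign M, ?_, (intervene_triv M).symm⟩
  intro X _ d h; cases h

/-- Proposition 2: empirical theories are similarity-based and satisfy
the principle of presumption. -/
theorem empirical_implies {U V D : Type} [Fintype U] [Fintype V] [DecidableEq V]
    (C : CausalTheory U V D) (h : Empirical C) :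
    SimilarityBased C ∧ Presumption C := by
  constructor
  · intro M φ
    constructor
    · intro X hX
      exact (h M φ X).2 ⟨M, self_mem_MSet M _, rfl, hX, fun W _ => rfl⟩
    · intro X hX
      obtain ⟨M', hM', hsol, hbf, _⟩ := (h M φ X).1 hX
      exact ⟨M', hM', hsol, hbf⟩
  · intro M φ X hpre M' hM' hsol hbf
    by_contra hcon
    push_neg at hcon
    exact hpre.2 ((h M φ X).2 ⟨M', hM', hsol.symm, hbf,
      fun W hW => hcon W hW⟩)

end HPFramework
end

section
/- For every similarity-based causal theory Cause: if Cause satisfies closure, then Cause satisfies the principle of presumption. -/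
namespace HPFramework

open Classical

variable {U V D : Type} [Fintype U] [Fintype V]

variable [DecidableEq V]

/-- similarity-based + closure implies presumption. -/
theorem closure_implies_presumption {U V D : Type} [Fintype U] [Fintype V] [DecidableEq V]
    (C : CausalTheory U V D) (hsim : SimilarityBased C) (hclo : Closure C) :
    Presumption C := by
  intro M φ X hpre M' hM' hsolX hbf
  by_contra h
  push_neg at h
  have hrel : CRel C φ M M' := ⟨hM', hbf.1, fun W hW => h W hW⟩
  exact hpre.2 (hclo M φ M' hrel ((hsim M' φ).1 hbf))

end HPFramework
end

section
/- If a causal theory Cause satisfies closure, then for every basic formula φ the relation ⊑_{Cause,φ} on causal models is transitive: whenever M¹ ⊑_{Cause,φ} M² and M² ⊑_{Cause,φ} M³, also M¹ ⊑_{Cause,φ} M³. -/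
namespace HPFramework

open Classical

variable {U V D : Type} [Fintype U] [Fintype V]

variable [DecidableEq V]

theorem CausalModel.eq_of_fields {U V D : Type} [Fintype U] [Fintype V]
    {M M' : CausalModel U V D} (h1 : M.rangeU = M'.rangeU) (h2 : M.range = M'.range)
    (h3 : M.parent = M'.parent) (h4 : M.F = M'.F) (h5 : M.ctx = M'.ctx) : M = M' := by
  cases M; cases M'
  cases h1; cases h2; cases h3; cases h4; cases h5
  rfl

/-- closure implies transitivity of `⊑_{C,φ}`. -/
theorem closure_implies_transitive {U V D : Type} [Fintype U] [Fintype V] [DecidableEq V]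
    (C : CausalTheory U V D) (hclo : Closure C) (φ : BForm V D)
    (M₁ M₂ M₃ : CausalModel U V D)
    (h12 : CRel C φ M₁ M₂) (h23 : CRel C φ M₂ M₃) :
    CRel C φ M₁ M₃ := by
  have hsub : C M₂ φ ⊆ C M₁ φ := hclo M₁ φ M₂ h12
  obtain ⟨⟨g, hg, rfl⟩, hsat2, hfix12⟩ := h12
  obtain ⟨⟨g', hg', rfl⟩, hsat3, hfix23⟩ := h23
  refine ⟨⟨⟨fun X => (g'.1 X).or (g.1 X), ?_⟩, ?_, ?_⟩, hsat3, ?_⟩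
  · intro X d hd
    cases hc : g'.1 X with
    | some d' =>
        simp only [hc, Option.or] at hd
        cases Option.some.inj hd
        exact g'.2 X d hc
    | none =>
        simp only [hc, Option.or] at hd
        exact g.2 X d hd
  · intro X hX d hd
    cases hc : g'.1 X with
    | some d' =>
        simp only at hd
        simp only [hc, Option.or] at hd
        cases Option.some.inj hd
        have h1 : d = sol (intervene M₁ g) X := hg' X (fun h => hX (hsub h)) d hc
        rw [h1, ← hfix12 X hX]
    | none =>
        simp only at hd
        simp only [hc, Option.or] at hd
        exact hg X hX d hd
  · refine CausalModel.eq_of_fields rfl rfl rfl ?_ rfl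
    funext X u v
    show (g'.1 X).getD ((g.1 X).getD (M₁.F X u v)) = ((g'.1 X).or (g.1 X)).getD (M₁.F X u v)
    cases g'.1 X <;> simp [Option.or]
  · intro X hX
    exact (hfix12 X hX).trans (hfix23 X (fun h => hX (hsub h)))


end HPFramework
end

section
/- For every empirical causal theory Cause: if the relation ⊑_{Cause,φ} is transitive for every basic formula φ, then Cause satisfies closure. -/
namespace HPFramework

open Classical

variable {U V D : Type} [Fintype U] [Fintype V]

variable [DecidableEq V]

/-- for empirical theories, transitivity of `⊑_{C,φ}` implies closure. -/
theorem transitive_implies_closure {U V D : Type} [Fintype U] [Fintype V] [DecidableEq V]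
    (C : CausalTheory U V D) (hemp : Empirical C)
    (htrans : ∀ φ : BForm V D, Transitive (CRel C φ)) :
    Closure C := by
  intro M φ M' hrel X hX
  obtain ⟨M'', hmem, hsolX, hBF, hW⟩ := (hemp M' φ X).mp hX
  have hrel' : CRel C φ M' M'' := ⟨hmem, hBF.1, fun W hW' => hW W hW'⟩
  have hrel2 := htrans φ hrel hrel'
  by_cases h : X ∈ C M φ
  · exact h
  · exact (hemp M φ X).mpr ⟨M'', hrel2.1, hrel2.2.2 X h, hBF, fun W hw => hrel2.2.2 W hw⟩

end HPFramework
end
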